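/- Let G(T) be the threshold graph on {1,…,n} with construction sequence T, and let 1 ≤ i < j ≤ n. Then d(i) = d(j) if and only if one of the following holds: (1) T(k) = 0 for all i ≤ k ≤ j; (2) T(k) = 1 for all i ≤ k ≤ j; (3) i = 1, T(1) = 0, and T(k) = 1 for all 2 ≤ k ≤ j. -/

import Mathlib

open Finset Matrix Polynomial

/-- The threshold graph on `Fin n` (vertex `i` of the paper corresponds to `⟨i-1, _⟩ : Fin n`)
with construction sequence `T` : two distinct vertices are adjacent iff the later one
(in the construction order) was added by a join operation. -/
def thresholdGraph (n : ℕ) (T : Fin n → Bool) : SimpleGraph (Fin n) where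
  Adj i j := i ≠ j ∧ T (max i j) = true
  symm := by
    constructor
    intro i j h
    exact ⟨h.1.symm, by rw [max_comm]; exact h.2⟩
  loopless := by
    constructor
    intro i h
    exact h.1 rfl

instance thresholdGraph.instDecidableRelAdj (n : ℕ) (T : Fin n → Bool) :
    DecidableRel (thresholdGraph n T).Adj :=
  fun i j => decidable_of_iff (i ≠ j ∧ T (max i j) = true) Iff.rfl

private lemma thG_adj_iff (n : ℕ) (T : Fin n → Bool) (v u : Fin n) :
    (thresholdGraph n T).Adj v u ↔ (v < u ∧ T u = true) ∨ (u < v ∧ T v = true) := by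
  show (v ≠ u ∧ T (max v u) = true) ↔ _
  rcases lt_trichotomy v u with h | h | h
  · simp [h.ne, max_eq_right h.le, h, not_lt_of_gt h]
  · simp [h]
  · simp [h.ne', max_eq_left h.le, h, not_lt_of_gt h]

private lemma thG_degree (n : ℕ) (T : Fin n → Bool) (v : Fin n) :
    (thresholdGraph n T).degree v =
      (univ.filter (fun u => v < u ∧ T u = true)).card +
        (if T v = true then (v : ℕ) else 0) := by
  classical
  rw [← SimpleGraph.card_neighborFinset_eq_degree, SimpleGraph.neighborFinset_eq_filter]
  have he : univ.filter ((thresholdGraph n T).Adj v) =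
      (univ.filter (fun u => v < u ∧ T u = true)) ∪
        (univ.filter (fun u => u < v ∧ T v = true)) := by
    ext u
    simp [thG_adj_iff, -Bool.forall_bool]
  rw [he, Finset.card_union_of_disjoint]
  · congr 1
    by_cases hv : T v = true
    · rw [if_pos hv]
      have : univ.filter (fun u => u < v ∧ T v = true) = Iio v := by
        ext u; simp [hv]
      rw [this, Fin.card_Iio]
    · rw [if_neg hv]
      have : univ.filter (fun u => u < v ∧ T v = true) = ∅ := by
        ext u; simp [hv]
      simp [this]
  · rw [Finset.disjoint_filter]
    intro u _ h1 h2
    exact absurd (h1.1.trans h2.1) (lt_irrefl v)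

theorem degree_eq_iff_thresholdGraph (n : ℕ) (T : Fin n → Bool) (hn : 0 < n)
    (hT1 : T ⟨0, hn⟩ = false) (i j : Fin n) (hij : i < j) :
    (thresholdGraph n T).degree i = (thresholdGraph n T).degree j ↔
      ((∀ k : Fin n, i ≤ k → k ≤ j → T k = false) ∨
       (∀ k : Fin n, i ≤ k → k ≤ j → T k = true) ∨
       ((i : ℕ) = 0 ∧ T i = false ∧ ∀ k : Fin n, i < k → k ≤ j → T k = true)) := by
  classical
  set A : ℕ := ((Ioc i j).filter (fun u => T u = true)).card with hA
  have hsplit : (univ.filter (fun u => i < u ∧ T u = true)).card =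
      (univ.filter (fun u => j < u ∧ T u = true)).card + A := by
    rw [hA, ← Finset.card_union_of_disjoint]
    · congr 1
      ext u
      simp only [mem_filter, mem_univ, true_and, mem_union, mem_Ioc]
      constructor
      · rintro ⟨hu, hT⟩
        rcases le_or_gt u j with h | h
        · exact Or.inr ⟨⟨hu, h⟩, hT⟩
        · exact Or.inl ⟨h, hT⟩
      · rintro (⟨hu, hT⟩ | ⟨⟨h1, _⟩, hT⟩)
        · exact ⟨hij.trans hu, hT⟩
        · exact ⟨h1, hT⟩
    · rw [Finset.disjoint_left]
      intro u hu hu'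
      simp only [mem_filter, mem_univ, true_and, mem_Ioc] at hu hu'
      exact absurd hu.1 (not_lt_of_ge hu'.1.2)
  have hAcard : A ≤ (j : ℕ) - i := by
    rw [hA, ← Fin.card_Ioc]
    exact Finset.card_filter_le _ _
  have hAall : A = (j : ℕ) - i ↔ ∀ k : Fin n, i < k → k ≤ j → T k = true := by
    rw [hA, ← Fin.card_Ioc]
    constructor
    · intro h k h1 h2
      have := (Finset.filter_eq_self).1
        (Finset.eq_of_subset_of_card_le (Finset.filter_subset _ _) (le_of_eq h.symm))
      exact this k (by simp [mem_Ioc, h1, h2])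
    · intro h
      congr 1
      exact Finset.filter_eq_self.2 (fun k hk => h k (mem_Ioc.1 hk).1 (mem_Ioc.1 hk).2)
  have hAzero : A = 0 ↔ ∀ k : Fin n, i < k → k ≤ j → T k = false := by
    rw [hA, Finset.card_eq_zero, Finset.filter_eq_empty_iff]
    constructor
    · intro h k h1 h2
      simpa using h (mem_Ioc.2 ⟨h1, h2⟩)
    · intro h k hk
      simp [h k (mem_Ioc.1 hk).1 (mem_Ioc.1 hk).2]
  have hijn : (i : ℕ) < j := hij
  rw [thG_degree, thG_degree, hsplit]
  have key : (univ.filter (fun u => j < u ∧ T u = true)).card + (A +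
      (if T i = true then (i : ℕ) else 0)) =
      (univ.filter (fun u => j < u ∧ T u = true)).card +
      (if T j = true then (j : ℕ) else 0) ↔
      A + (if T i = true then (i : ℕ) else 0) = (if T j = true then (j : ℕ) else 0) := by
    omega
  rw [add_assoc, key]
  by_cases hi : T i = true <;> by_cases hj : T j = true <;>
    simp only [hi, hj, if_pos, if_neg, Bool.true_eq_false, Bool.false_eq_true, if_true, if_false]
  · -- T i = true, T j = true : A + i = j ↔ all true on [i,j]
    constructor
    · intro h
      refine Or.inr (Or.inl ?_)
      intro k hk1 hk2
      rcases eq_or_lt_of_le hk1 with he | hl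
      · rw [← he]; exact hi
      · exact hAall.1 (by omega) k hl hk2
    · rintro (h | h | h)
      · exact absurd (h i le_rfl hij.le) (by simp [hi])
      · have := hAall.2 (fun k h1 h2 => h k h1.le h2)
        omega
      · exact h.2.1.elim
  · -- T i = true, T j = false : A + i = 0 impossible
    constructor
    · intro h
      have hi0 : (i : ℕ) = 0 := by omega
      have : i = ⟨0, hn⟩ := Fin.ext hi0
      rw [this] at hi
      rw [hT1] at hi
      exact absurd hi (by simp)
    · rintro (h | h | h)
      · exact absurd (h i le_rfl hij.le) (by simp [hi])
      · exact absurd (h j hij.le le_rfl) (by simp [hj])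
      · exact h.2.1.elim
  · -- T i = false, T j = true : A = j ↔ i = 0 ∧ all later true
    constructor
    · intro h
      refine Or.inr (Or.inr ?_)
      have hi0 : (i : ℕ) = 0 := by omega
      exact ⟨hi0, trivial, hAall.1 (by omega)⟩
    · rintro (h | h | h)
      · exact absurd (h j hij.le le_rfl) (by simp [hj])
      · exact absurd (h i le_rfl hij.le) (by simp [hi])
      · have := hAall.2 h.2.2
        omega
  · -- T i = false, T j = false : A = 0 ↔ all false
    constructor
    · intro h
      refine Or.inl ?_
      intro k hk1 hk2
      rcases eq_or_lt_of_le hk1 with he | hl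
      · rw [← he]; simpa using hi
      · exact hAzero.1 (by omega) k hl hk2
    · rintro (h | h | h)
      · have : A = 0 := hAzero.2 (fun k h1 h2 => h k h1.le h2)
        omega
      · exact absurd (h i le_rfl hij.le) (by simp [hi])
      · exact absurd (h.2.2 j hij le_rfl) (by simp [hj])
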